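/- Let P₁, P₂ ⊆ [ℕ]^ℕ be open sets with generating sets ⟨P₁⟩, ⟨P₂⟩ of finite strictly increasing sequences, where every sequence in ⟨P₁⟩ has length at least 2. Let P be the open set generated by ⟨P₁⟩ ⊠ ⟨P₂⟩ (the interleaved pairing of codes). Then the homogeneous solutions landing in P are exactly the interleavings f ⊠ g = ⟨⟨f(0),g(0)⟩, ⟨f(1),g(1)⟩, …⟩ where f is a homogeneous solution landing in P₁ and g is a homogeneous solution landing in P₂. -/

import Mathlib

/-- `σ` is a prefix (initial segment) of the infinite sequence `f`. -/
def PrefixOf (σ : List ℕ) (f : ℕ → ℕ) : Prop :=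
  ∀ i (h : i < σ.length), σ.get ⟨i, h⟩ = f i

/-- `f` belongs to the open set generated by the code `C`. -/
def InGen (C : Set (List ℕ)) (f : ℕ → ℕ) : Prop := ∃ τ ∈ C, PrefixOf τ f

/-- `l ∈ σ ⊠ τ`: `l` is an interleaving of strictly increasing extensions of
`σ` and `τ` of length `max |σ| |τ|`. -/
def Boxed (pair : ℕ → ℕ → ℕ) (σ τ l : List ℕ) : Prop :=
  ∃ ρ θ : List ℕ, σ <+: ρ ∧ τ <+: θ ∧
    List.Chain' (· < ·) ρ ∧ List.Chain' (· < ·) θ ∧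
    ρ.length = max σ.length τ.length ∧ θ.length = ρ.length ∧
    l = List.zipWith pair ρ θ

/-- The generating set `⟨P₁⟩ ⊠ ⟨P₂⟩`. -/
def GenBox (pair : ℕ → ℕ → ℕ) (C₁ C₂ : Set (List ℕ)) : Set (List ℕ) :=
  {l | ∃ σ ∈ C₁, ∃ τ ∈ C₂, Boxed pair σ τ l}

lemma prefix_ofFn {σ : List ℕ} {f : ℕ → ℕ} (hp : PrefixOf σ f) {N : ℕ}
    (hN : σ.length ≤ N) : σ <+: List.ofFn (fun i : Fin N => f i) := by
  rw [List.prefix_iff_eq_take]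
  apply List.ext_getElem
  · simp [Nat.min_eq_left hN]
  · intro i h1 h2
    have := hp i h1
    simp only [List.get_eq_getElem] at this
    simp [List.getElem_take, this]

lemma chain'_ofFn {f : ℕ → ℕ} (hf : StrictMono f) {N : ℕ} :
    List.Chain' (· < ·) (List.ofFn (fun i : Fin N => f i)) := by
  rw [List.Chain', List.isChain_iff_getElem]
  intro i h
  simp only [List.length_ofFn] at h
  simp only [List.get_eq_getElem, List.getElem_ofFn]
  exact hf (Nat.lt_succ_self i)

theorem stmt8 (pair : ℕ → ℕ → ℕ)
    (hpair1 : ∀ b, StrictMono (fun a => pair a b))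
    (hpair2 : ∀ a, StrictMono (pair a))
    (hpairInj : ∀ a b c d, pair a b = pair c d → a = c ∧ b = d)
    (C₁ C₂ : Set (List ℕ))
    (hC₁ : ∀ σ ∈ C₁, List.Chain' (· < ·) σ ∧ 2 ≤ σ.length)
    (hC₂ : ∀ τ ∈ C₂, List.Chain' (· < ·) τ) :
    {h : ℕ → ℕ | StrictMono h ∧
        ∀ g : ℕ → ℕ, StrictMono g → InGen (GenBox pair C₁ C₂) (h ∘ g)} =
      {h : ℕ → ℕ | ∃ f g : ℕ → ℕ, StrictMono f ∧ StrictMono g ∧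
        (∀ g' : ℕ → ℕ, StrictMono g' → InGen C₁ (f ∘ g')) ∧
        (∀ g' : ℕ → ℕ, StrictMono g' → InGen C₂ (g ∘ g')) ∧
        h = fun n => pair (f n) (g n)} := by
  ext h
  simp only [Set.mem_setOf_eq]
  constructor
  · rintro ⟨hmono, hhom⟩
    have key : ∀ n : ℕ, ∃ a b a' b', a < a' ∧ b < b' ∧
        h n = pair a b ∧ h (n + 1) = pair a' b' := by
      intro n
      obtain ⟨l, ⟨σ, hσ, τ, hτ, ρ, θ, hσρ, hτθ, hρc, hθc, hρlen, hθlen, hl⟩, hpre⟩ :=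
        hhom (fun i => n + i) (fun x y hxy => by dsimp; omega)
      have hσ2 := (hC₁ σ hσ).2
      have hρ2 : 2 ≤ ρ.length := by rw [hρlen]; exact le_trans hσ2 (le_max_left _ _)
      have hll : l.length = ρ.length := by
        rw [hl, List.length_zipWith, hθlen, Nat.min_self]
      have hθ2 : 2 ≤ θ.length := by omega
      have h0 : l.get ⟨0, by omega⟩ = h n := by
        have := hpre 0 (by omega); simpa using this
      have h1 : l.get ⟨1, by omega⟩ = h (n + 1) := by
        have := hpre 1 (by omega); simpa using this
      simp only [List.get_eq_getElem, hl, List.getElem_zipWith] at h0 h1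
      refine ⟨ρ.get ⟨0, by omega⟩, θ.get ⟨0, by omega⟩,
        ρ.get ⟨1, by omega⟩, θ.get ⟨1, by omega⟩, ?_, ?_, ?_, ?_⟩
      · exact List.isChain_iff_getElem.mp hρc 0 (by omega)
      · exact List.isChain_iff_getElem.mp hθc 0 (by omega)
      · simp only [List.get_eq_getElem]; exact h0.symm
      · simp only [List.get_eq_getElem]; exact h1.symm
    choose a b a' b' hab hbb hn hn1 using key
    have haa' : ∀ n, a' n = a (n + 1) ∧ b' n = b (n + 1) := fun n =>
      hpairInj _ _ _ _ ((hn1 n).symm.trans (hn (n + 1)))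
    have hamono : StrictMono a := strictMono_nat_of_lt_succ fun n => by
      have := hab n; rwa [(haa' n).1] at this
    have hbmono : StrictMono b := strictMono_nat_of_lt_succ fun n => by
      have := hbb n; rwa [(haa' n).2] at this
    refine ⟨a, b, hamono, hbmono, ?_, ?_, ?_⟩
    · intro g' hg'
      obtain ⟨l, ⟨σ, hσ, τ, hτ, ρ, θ, hσρ, hτθ, hρc, hθc, hρlen, hθlen, hl⟩, hpre⟩ :=
        hhom g' hg'
      have hll : l.length = ρ.length := by
        rw [hl, List.length_zipWith, hθlen, Nat.min_self]
      refine ⟨σ, hσ, ?_⟩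
      intro i hi
      have hiρ : i < ρ.length := by
        rw [hρlen]; exact lt_of_lt_of_le hi (le_max_left _ _)
      have hiθ : i < θ.length := by omega
      have hli : l.get ⟨i, by omega⟩ = h (g' i) := hpre i (by omega)
      simp only [List.get_eq_getElem, hl, List.getElem_zipWith] at hli
      rw [hn (g' i)] at hli
      have := (hpairInj _ _ _ _ hli).1
      have hσi : σ.get ⟨i, hi⟩ = ρ.get ⟨i, hiρ⟩ := by
        simp only [List.get_eq_getElem]; exact hσρ.getElem hi
      simp only [Function.comp_apply]
      rw [hσi]; simp only [List.get_eq_getElem]; exact this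
    · intro g' hg'
      obtain ⟨l, ⟨σ, hσ, τ, hτ, ρ, θ, hσρ, hτθ, hρc, hθc, hρlen, hθlen, hl⟩, hpre⟩ :=
        hhom g' hg'
      have hll : l.length = ρ.length := by
        rw [hl, List.length_zipWith, hθlen, Nat.min_self]
      refine ⟨τ, hτ, ?_⟩
      intro i hi
      have hiρ : i < ρ.length := by
        rw [hρlen]; exact lt_of_lt_of_le hi (le_max_right _ _)
      have hiθ : i < θ.length := by omega
      have hli : l.get ⟨i, by omega⟩ = h (g' i) := hpre i (by omega)
      simp only [List.get_eq_getElem, hl, List.getElem_zipWith] at hli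
      rw [hn (g' i)] at hli
      have := (hpairInj _ _ _ _ hli).2
      have hτi : τ.get ⟨i, hi⟩ = θ.get ⟨i, hiθ⟩ := by
        simp only [List.get_eq_getElem]; exact hτθ.getElem hi
      simp only [Function.comp_apply]
      rw [hτi]; simp only [List.get_eq_getElem]; exact this
    · funext n; exact hn n
  · rintro ⟨f, g, hf, hg, hfhom, hghom, rfl⟩
    constructor
    · intro m n hmn
      exact lt_trans (hpair1 (g m) (hf hmn)) (hpair2 (f n) (hg hmn))
    · intro g' hg'
      obtain ⟨σ, hσ, hσp⟩ := hfhom g' hg'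
      obtain ⟨τ, hτ, hτp⟩ := hghom g' hg'
      set N := max σ.length τ.length with hN
      refine ⟨List.zipWith pair (List.ofFn fun i : Fin N => f (g' i))
        (List.ofFn fun i : Fin N => g (g' i)), ⟨σ, hσ, τ, hτ, ?_⟩, ?_⟩
      · exact ⟨_, _, prefix_ofFn hσp (le_max_left _ _),
          prefix_ofFn hτp (le_max_right _ _),
          chain'_ofFn (hf.comp hg'), chain'_ofFn (hg.comp hg'),
          by simp, by simp, rfl⟩
      · intro i hi
        simp only [List.length_zipWith, List.length_ofFn, Nat.min_self] at hi
        simp [List.get_eq_getElem, List.getElem_zipWith, List.getElem_ofFn]
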